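/- Let 𝒳 be a metrizable topological space with its Borel σ-algebra, G : 𝒳 → ℝ a continuous function, and p ∈ (0,1). For a Borel probability measure μ on 𝒳 define F_μ(h) = μ({x : G(x) ≤ h}) and the upper quantile Q_p^R(μ) = inf{h ∈ ℝ : F_μ(h) > p}. Then Q_p^R is quasi-concave and upper semicontinuous on P(𝒳): (i) for all probability measures μ, π and λ ∈ [0,1], Q_p^R(λμ + (1−λ)π) ≥ min{Q_p^R(μ), Q_p^R(π)}; (ii) for every α ∈ ℝ the upper level set {μ ∈ P(𝒳) : Q_p^R(μ) ≥ α} is closed for the topology of weak convergence. -/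

import Mathlib

open MeasureTheory Filter Topology
open scoped ENNReal

section Aux

variable {𝒳 : Type*} [TopologicalSpace 𝒳] [MeasurableSpace 𝒳] [BorelSpace 𝒳]
  {G : 𝒳 → ℝ} {p : ℝ}

/-- The quantile set is nonempty. -/
lemma stmt8_Sne (hp0 : 0 ≤ p) (hp1 : p < 1) (μ : ProbabilityMeasure 𝒳) :
    {h : ℝ | p < ((μ : Measure 𝒳) {x | G x ≤ h}).toReal}.Nonempty := by
  have hmono : Monotone (fun n : ℕ => {x : 𝒳 | G x ≤ (n : ℝ)}) := by
    intro m n hmn x hx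
    simp only [Set.mem_setOf_eq] at hx ⊢
    exact le_trans hx (by exact_mod_cast hmn)
  have htend := tendsto_measure_iUnion_atTop (μ := (μ : Measure 𝒳)) hmono
  have hU : (⋃ n : ℕ, {x : 𝒳 | G x ≤ (n : ℝ)}) = Set.univ := by
    ext x
    simp only [Set.mem_iUnion, Set.mem_univ, iff_true, Set.mem_setOf_eq]
    exact exists_nat_ge (G x)
  rw [hU, measure_univ] at htend
  have hev : ∀ᶠ n : ℕ in atTop,
      ENNReal.ofReal p < ((μ : Measure 𝒳) ∘ fun n : ℕ => {x : 𝒳 | G x ≤ (n : ℝ)}) n :=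
    htend.eventually (eventually_gt_nhds (ENNReal.ofReal_lt_one.mpr hp1))
  obtain ⟨n, hn⟩ := hev.exists
  refine ⟨(n : ℝ), ?_⟩
  have := (ENNReal.toReal_lt_toReal ENNReal.ofReal_ne_top (measure_ne_top _ _)).mpr hn
  rwa [ENNReal.toReal_ofReal hp0] at this

/-- The quantile set is bounded below. -/
lemma stmt8_Sbdd (hG : Continuous G) (hp0 : 0 < p) (μ : ProbabilityMeasure 𝒳) :
    BddBelow {h : ℝ | p < ((μ : Measure 𝒳) {x | G x ≤ h}).toReal} := by
  have hanti : Antitone (fun n : ℕ => {x : 𝒳 | G x ≤ -(n : ℝ)}) := by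
    intro m n hmn x hx
    simp only [Set.mem_setOf_eq] at hx ⊢
    exact le_trans hx (by simpa using (by exact_mod_cast hmn : (m : ℝ) ≤ n))
  have hmble : ∀ n : ℕ, NullMeasurableSet {x : 𝒳 | G x ≤ -(n : ℝ)} (μ : Measure 𝒳) :=
    fun n => ((isClosed_le hG continuous_const).measurableSet).nullMeasurableSet
  have htend := tendsto_measure_iInter_atTop (μ := (μ : Measure 𝒳)) hmble hanti
    ⟨0, measure_ne_top _ _⟩
  have hI : (⋂ n : ℕ, {x : 𝒳 | G x ≤ -(n : ℝ)}) = ∅ := by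
    ext x
    simp only [Set.mem_iInter, Set.mem_empty_iff_false, iff_false, Set.mem_setOf_eq, not_forall]
    obtain ⟨n, hn⟩ := exists_nat_gt (-G x)
    exact ⟨n, by linarith⟩
  rw [hI, measure_empty] at htend
  have hev : ∀ᶠ n : ℕ in atTop,
      ((μ : Measure 𝒳) ∘ fun n : ℕ => {x : 𝒳 | G x ≤ -(n : ℝ)}) n < ENNReal.ofReal p :=
    htend.eventually (eventually_lt_nhds (by simpa using ENNReal.ofReal_pos.mpr hp0))
  obtain ⟨n, hn⟩ := hev.exists
  refine ⟨-(n : ℝ), fun h hh => ?_⟩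
  by_contra hcon
  push_neg at hcon
  have hsub : {x : 𝒳 | G x ≤ h} ⊆ {x : 𝒳 | G x ≤ -(n : ℝ)} :=
    fun x hx => le_trans hx hcon.le
  have : ((μ : Measure 𝒳) {x | G x ≤ h}).toReal < p := by
    have hlt : (μ : Measure 𝒳) {x | G x ≤ h} < ENNReal.ofReal p :=
      lt_of_le_of_lt (measure_mono hsub) hn
    have := (ENNReal.toReal_lt_toReal (measure_ne_top _ _) ENNReal.ofReal_ne_top).mpr hlt
    rwa [ENNReal.toReal_ofReal hp0.le] at this
  exact absurd hh (not_lt.mpr this.le)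

/-- Characterization of the upper level set. -/
lemma stmt8_iff (hG : Continuous G) (hp : p ∈ Set.Ioo (0 : ℝ) 1) (μ : ProbabilityMeasure 𝒳)
    (α : ℝ) :
    α ≤ sInf {h : ℝ | p < ((μ : Measure 𝒳) {x | G x ≤ h}).toReal} ↔
      (μ : Measure 𝒳) {x | G x < α} ≤ ENNReal.ofReal p := by
  constructor
  · intro hα
    have key : ∀ h : ℝ, h < α → (μ : Measure 𝒳) {x | G x ≤ h} ≤ ENNReal.ofReal p := by
      intro h hh
      by_contra hcon
      push_neg at hcon
      have hmem : h ∈ {h : ℝ | p < ((μ : Measure 𝒳) {x | G x ≤ h}).toReal} := by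
        have := (ENNReal.toReal_lt_toReal ENNReal.ofReal_ne_top (measure_ne_top _ _)).mpr hcon
        rwa [ENNReal.toReal_ofReal hp.1.le] at this
      exact absurd (le_trans hα (csInf_le (stmt8_Sbdd hG hp.1 μ) hmem)) (not_le.mpr hh)
    have hmono : Monotone (fun n : ℕ => {x : 𝒳 | G x ≤ α - ((n : ℝ) + 1)⁻¹}) := by
      intro m n hmn x hx
      simp only [Set.mem_setOf_eq] at hx ⊢
      have : ((n : ℝ) + 1)⁻¹ ≤ ((m : ℝ) + 1)⁻¹ := by
        apply inv_anti₀ (by positivity)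
        exact_mod_cast Nat.add_le_add_right hmn 1
      linarith
    have hU : (⋃ n : ℕ, {x : 𝒳 | G x ≤ α - ((n : ℝ) + 1)⁻¹}) = {x : 𝒳 | G x < α} := by
      ext x
      simp only [Set.mem_iUnion, Set.mem_setOf_eq]
      constructor
      · rintro ⟨n, hn⟩
        have : (0 : ℝ) < ((n : ℝ) + 1)⁻¹ := by positivity
        linarith
      · intro hx
        obtain ⟨n, hn⟩ := exists_nat_one_div_lt (by linarith : 0 < α - G x)
        rw [one_div] at hn
        exact ⟨n, by linarith⟩
    have htend := tendsto_measure_iUnion_atTop (μ := (μ : Measure 𝒳)) hmono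
    rw [hU] at htend
    refine le_of_tendsto htend (Eventually.of_forall fun n => ?_)
    refine key _ ?_
    have : (0:ℝ) < ((n : ℝ) + 1)⁻¹ := by positivity
    linarith
  · intro hμ
    refine le_csInf (stmt8_Sne hp.1.le hp.2 μ) fun h hh => ?_
    by_contra hcon
    push_neg at hcon
    have hsub : {x : 𝒳 | G x ≤ h} ⊆ {x : 𝒳 | G x < α} := fun x hx => lt_of_le_of_lt hx hcon
    have : ((μ : Measure 𝒳) {x | G x ≤ h}).toReal ≤ p := by
      have hle : (μ : Measure 𝒳) {x | G x ≤ h} ≤ ENNReal.ofReal p :=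
        le_trans (measure_mono hsub) hμ
      have := ENNReal.toReal_mono ENNReal.ofReal_ne_top hle
      rwa [ENNReal.toReal_ofReal hp.1.le] at this
    exact absurd hh (not_lt.mpr this)

end Aux

/-- Closedness of πupper level sets of open-set measures. -/
lemma stmt8_closed {𝒳 : Type*} [TopologicalSpace 𝒳] [TopologicalSpace.MetrizableSpace 𝒳]
    [MeasurableSpace 𝒳] [BorelSpace 𝒳] {U : Set 𝒳} (hU : IsOpen U) (c : ℝ≥0∞) :
    IsClosed {μ : ProbabilityMeasure 𝒳 | (μ : Measure 𝒳) U ≤ c} := by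
  rw [isClosed_iff_clusterPt]
  intro μ hμ
  set L := 𝓝 μ ⊓ 𝓟 {ν : ProbabilityMeasure 𝒳 | (ν : Measure 𝒳) U ≤ c} with hL
  haveI : L.NeBot := hμ
  have htend : Tendsto (id : ProbabilityMeasure 𝒳 → ProbabilityMeasure 𝒳) L (𝓝 μ) := by
    rw [tendsto_id']
    exact inf_le_left
  have hopen : (μ : Measure 𝒳) U ≤ L.liminf fun ν : ProbabilityMeasure 𝒳 => (ν : Measure 𝒳) U :=
    le_measure_liminf_of_limsup_measure_compl_le hU.measurableSet
      (ProbabilityMeasure.limsup_measure_closed_le_of_tendsto htend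
        (isClosed_compl_iff.mpr hU))
  have hev : ∀ᶠ ν : ProbabilityMeasure 𝒳 in L, (ν : Measure 𝒳) U ≤ c :=
    eventually_inf_principal.mpr (Eventually.of_forall fun ν hν => hν)
  have hliminf : (L.liminf fun ν : ProbabilityMeasure 𝒳 => (ν : Measure 𝒳) U) ≤ c :=
    liminf_le_of_frequently_le hev.frequently
  exact le_trans hopen hliminf

theorem stmt_8
    {𝒳 : Type*} [TopologicalSpace 𝒳] [TopologicalSpace.MetrizableSpace 𝒳]
    [MeasurableSpace 𝒳] [BorelSpace 𝒳]
    (G : 𝒳 → ℝ) (hG : Continuous G) (p : ℝ) (hp : p ∈ Set.Ioo (0 : ℝ) 1)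
    (Q : ProbabilityMeasure 𝒳 → ℝ)
    (hQ : Q = fun (μ : ProbabilityMeasure 𝒳) => sInf {h : ℝ | p < ((μ : Measure 𝒳) {x | G x ≤ h}).toReal}) :
    (∀ (μ π σ : ProbabilityMeasure 𝒳) (lam : ℝ≥0∞), lam ≤ 1 →
      (σ : Measure 𝒳) = lam • (μ : Measure 𝒳) + (1 - lam) • (π : Measure 𝒳) →
      min (Q μ) (Q π) ≤ Q σ) ∧
    ∀ α : ℝ, IsClosed {μ : ProbabilityMeasure 𝒳 | α ≤ Q μ} := by
  subst hQ
  constructor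
  · intro μ π σ lam hlam hσ
    have hlam_ne : lam ≠ ∞ := fun h => by simp [h] at hlam
    have hone : lam.toReal + (1 - lam).toReal = 1 := by
      rw [← ENNReal.toReal_add hlam_ne (by finiteness)]
      rw [add_tsub_cancel_of_le hlam]
      simp
    refine le_csInf (stmt8_Sne hp.1.le hp.2 σ) fun h hh => ?_
    have hsplit : p < ((μ : Measure 𝒳) {x | G x ≤ h}).toReal ∨
        p < ((π : Measure 𝒳) {x | G x ≤ h}).toReal := by
      by_contra hcon
      push_neg at hcon
      have hσh : ((σ : Measure 𝒳) {x | G x ≤ h}).toReal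
          = lam.toReal * ((μ : Measure 𝒳) {x | G x ≤ h}).toReal
            + (1 - lam).toReal * ((π : Measure 𝒳) {x | G x ≤ h}).toReal := by
        rw [hσ]
        simp only [Measure.add_apply, Measure.smul_apply, smul_eq_mul]
        rw [ENNReal.toReal_add (by finiteness) (by finiteness),
          ENNReal.toReal_mul, ENNReal.toReal_mul]
      have h1 : lam.toReal * ((μ : Measure 𝒳) {x | G x ≤ h}).toReal ≤ lam.toReal * p :=
        mul_le_mul_of_nonneg_left hcon.1 ENNReal.toReal_nonneg
      have h2 : (1 - lam).toReal * ((π : Measure 𝒳) {x | G x ≤ h}).toReal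
          ≤ (1 - lam).toReal * p :=
        mul_le_mul_of_nonneg_left hcon.2 ENNReal.toReal_nonneg
      have : ((σ : Measure 𝒳) {x | G x ≤ h}).toReal ≤ p := by
        rw [hσh]
        calc lam.toReal * ((μ : Measure 𝒳) {x | G x ≤ h}).toReal
            + (1 - lam).toReal * ((π : Measure 𝒳) {x | G x ≤ h}).toReal
            ≤ lam.toReal * p + (1 - lam).toReal * p := add_le_add h1 h2
          _ = (lam.toReal + (1 - lam).toReal) * p := by ring
          _ = p := by rw [hone, one_mul]
      exact absurd hh (not_lt.mpr this)
    rcases hsplit with hμh | hπh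
    · exact le_trans (min_le_left _ _) (csInf_le (stmt8_Sbdd hG hp.1 μ) hμh)
    · exact le_trans (min_le_right _ _) (csInf_le (stmt8_Sbdd hG hp.1 π) hπh)
  · intro α
    have hset : {μ : ProbabilityMeasure 𝒳 |
        α ≤ sInf {h : ℝ | p < ((μ : Measure 𝒳) {x | G x ≤ h}).toReal}}
        = {μ : ProbabilityMeasure 𝒳 | (μ : Measure 𝒳) {x | G x < α} ≤ ENNReal.ofReal p} := by
      ext μ
      exact stmt8_iff hG hp μ α
    rw [hset]
    exact stmt8_closed (isOpen_lt hG continuous_const) _
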